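/- Let U be a nonsingular nonnegative n×n matrix whose inverse is a Z-matrix (off-diagonal entries of U⁻¹ are nonpositive), and suppose the n-th row sum of U is minimal: Σ_j U_{nj} ≤ Σ_j U_{ij} for all i. Assume all row sums of U are positive. Then the n-th row sum of U⁻¹ satisfies Σ_l (U⁻¹)_{nl} ≥ 1/(Σ_j U_{nj}) > 0. -/
import Mathlib


open Matrix BigOperators

theorem min_row_sum_inverse_row_sum (n : ℕ) (U : Matrix (Fin (n + 1)) (Fin (n + 1)) ℝ)
    (hU : IsUnit U.det) (hnonneg : ∀ i j, 0 ≤ U i j)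
    (hZ : ∀ i j, i ≠ j → U⁻¹ i j ≤ 0)
    (hmin : ∀ i, ∑ j, U (Fin.last n) j ≤ ∑ j, U i j)
    (hpos : ∀ i, 0 < ∑ j, U i j) :
    1 / (∑ j, U (Fin.last n) j) ≤ ∑ l, U⁻¹ (Fin.last n) l ∧
      0 < (1 : ℝ) / (∑ j, U (Fin.last n) j) := by
  have hs : 0 < ∑ j, U (Fin.last n) j := hpos _
  have hinv : U⁻¹ * U = 1 := Matrix.nonsing_inv_mul U hU
  have key : ∑ l, U⁻¹ (Fin.last n) l * (∑ j, U l j) = 1 := by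
    simp_rw [Finset.mul_sum]
    rw [Finset.sum_comm]
    have h : ∀ j, ∑ l, U⁻¹ (Fin.last n) l * U l j
        = (1 : Matrix (Fin (n + 1)) (Fin (n + 1)) ℝ) (Fin.last n) j := by
      intro j; rw [← hinv]; simp [Matrix.mul_apply]
    simp_rw [h]
    simp [Matrix.one_apply]
  have hle : (1 : ℝ) ≤ (∑ l, U⁻¹ (Fin.last n) l) * (∑ j, U (Fin.last n) j) := by
    rw [← key, Finset.sum_mul]
    apply Finset.sum_le_sum
    intro l _
    rcases eq_or_ne l (Fin.last n) with rfl | hl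
    · exact le_refl _
    · exact mul_le_mul_of_nonpos_left (hmin l) (hZ _ _ hl.symm)
  constructor
  · rw [div_le_iff₀ hs]
    linarith
  · positivity
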